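/- Assume char k ≠ 2, that α2, α3, β2, β3 are pairwise distinct and all nonzero, and that α2·α3 ≠ β2·β3. Then the quartic f, viewed as a polynomial in the two variables Y and Z over k, is irreducible in k[Y,Z]. -/
import Mathlib

section Helpers

open Polynomial

/-- An even quartic with nonzero leading coefficient and nonzero "discriminant"
`c2^2 - 4*c4*c0` is not a square in `R[X]` (char ≠ 2). -/
lemma not_sq_even_quartic {R : Type*} [CommRing R] [IsDomain R]
    (two_ne : (2 : R) ≠ 0) (c4 c2 c0 : R) (h4 : c4 ≠ 0)
    (hD : c2 ^ 2 - 4 * c4 * c0 ≠ 0) (t : R[X]) :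
    t ^ 2 ≠ C c4 * X ^ 4 + C c2 * X ^ 2 + C c0 := by
  intro ht
  have hP4 : (C c4 * X ^ 4 + C c2 * X ^ 2 + C c0 : R[X]).natDegree = 4 := by
    compute_degree!
  have htne : t ≠ 0 := by
    intro h0
    rw [h0] at ht
    simp at ht
    apply h4
    have := congrArg (fun p : R[X] => coeff p 4) ht
    simpa using this.symm
  have hdeg : t.natDegree = 2 := by
    have := congrArg Polynomial.natDegree ht
    rw [hP4, Polynomial.natDegree_pow] at this
    omega
  have hc3 : t.coeff 3 = 0 := Polynomial.coeff_eq_zero_of_natDegree_lt (by omega)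
  have hc4 : t.coeff 4 = 0 := Polynomial.coeff_eq_zero_of_natDegree_lt (by omega)
  have key : ∀ n, (t * t).coeff n = (C c4 * X ^ 4 + C c2 * X ^ 2 + C c0 : R[X]).coeff n := by
    intro n; rw [← pow_two, ht]
  have e4 := key 4
  have e3 := key 3
  have e2 := key 2
  have e0 := key 0
  rw [Polynomial.coeff_mul] at e4 e3 e2 e0
  simp [Finset.Nat.sum_antidiagonal_eq_sum_range_succ_mk, Finset.sum_range_succ,
    coeff_C, coeff_X_pow, hc3, hc4] at e4 e3 e2 e0
  -- e4 : t2^2 = c4, e3 : t1*t2 + t2*t1 = 0, e2 : ..., e0 : t0^2 = c0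
  set t0 := t.coeff 0
  set t1 := t.coeff 1
  set t2 := t.coeff 2
  have ht2 : t2 ≠ 0 := by
    intro h; apply h4; rw [← e4, h]; ring
  have ht1 : t1 = 0 := by
    have : t1 * (t2 * 2) = 0 := by linear_combination e3
    rcases mul_eq_zero.mp this with h | h
    · exact h
    · exact absurd h (mul_ne_zero ht2 two_ne)
  apply hD
  rw [ht1] at e2
  linear_combination (-(c2 + 2*t0*t2))*e2 + 4*t0^2*e4 + 4*c4*e0

lemma sq_descend {R K : Type*} [CommRing R] [IsDomain R] [IsIntegrallyClosed R]
    [Field K] [Algebra R K] [IsFractionRing R K]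
    (p : R) (s : K) (hs : s ^ 2 = algebraMap R K p) : ∃ t : R, t ^ 2 = p := by
  have hint : IsIntegral R s := by
    refine ⟨X ^ 2 - C p, monic_X_pow_sub_C p (by norm_num), ?_⟩
    simp [hs]
  obtain ⟨t, ht⟩ := IsIntegrallyClosed.isIntegral_iff.mp hint
  refine ⟨t, IsFractionRing.injective R K ?_⟩
  rw [map_pow, ht, hs]

variable {K : Type*} [Field K]

lemma quartic_factor_aux (A B C0 : K) (hA : A ≠ 0) (g h : K[X])
    (hF : C A * X ^ 4 + C B * X ^ 2 + C C0 = g * h)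
    (hg1 : 1 ≤ g.natDegree) (hg2 : g.natDegree ≤ 2) :
    (∃ s : K, s ^ 2 = B ^ 2 - 4 * A * C0) ∨ (∃ s : K, A * s ^ 2 = C0) := by
  have hgne : g ≠ 0 := by
    intro h0; rw [h0] at hg1; simp at hg1
  interval_cases hd : g.natDegree
  · -- degree 1 : root
    have hgrep : g = C (g.coeff 1) * X + C (g.coeff 0) :=
      Polynomial.eq_X_add_C_of_degree_le_one
        ((Polynomial.natDegree_le_iff_degree_le (n := 1)).mp (by omega))
    have ha : g.coeff 1 ≠ 0 := by
      have := Polynomial.leadingCoeff_ne_zero.mpr hgne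
      rwa [Polynomial.leadingCoeff, hd] at this
    set z : K := -(g.coeff 0) / (g.coeff 1) with hz
    have hgz : g.eval z = 0 := by
      rw [hgrep]
      simp only [eval_add, eval_mul, eval_C, eval_X, hz]
      field_simp
      ring
    have hFz : A * z ^ 4 + B * z ^ 2 + C0 = 0 := by
      have h1 := congrArg (Polynomial.eval z) hF
      rw [Polynomial.eval_mul, hgz, zero_mul] at h1
      simpa using h1
    left
    exact ⟨2 * A * z ^ 2 + B, by linear_combination 4 * A * hFz⟩
  · -- degree 2
    have hhne : h ≠ 0 := by
      intro h0; rw [h0, mul_zero] at hF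
      have := congrArg (fun p : K[X] => coeff p 4) hF
      simp at this; exact hA this
    have hdh : h.natDegree = 2 := by
      have hFd : (C A * X ^ 4 + C B * X ^ 2 + C C0 : K[X]).natDegree = 4 := by
        compute_degree!
      have := Polynomial.natDegree_mul hgne hhne
      rw [← hF, hFd, hd] at this
      omega
    have hgc3 : g.coeff 3 = 0 := Polynomial.coeff_eq_zero_of_natDegree_lt (by omega)
    have hgc4 : g.coeff 4 = 0 := Polynomial.coeff_eq_zero_of_natDegree_lt (by omega)
    have hhc3 : h.coeff 3 = 0 := Polynomial.coeff_eq_zero_of_natDegree_lt (by omega)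
    have hhc4 : h.coeff 4 = 0 := Polynomial.coeff_eq_zero_of_natDegree_lt (by omega)
    have key : ∀ n, (C A * X ^ 4 + C B * X ^ 2 + C C0 : K[X]).coeff n = (g * h).coeff n := by
      intro n; rw [hF]
    have e4 := key 4
    have e3 := key 3
    have e2 := key 2
    have e1 := key 1
    have e0 := key 0
    rw [Polynomial.coeff_mul] at e4 e3 e2 e1 e0
    simp [Finset.Nat.sum_antidiagonal_eq_sum_range_succ_mk, Finset.sum_range_succ,
      coeff_C, coeff_X_pow, hgc3, hgc4, hhc3, hhc4] at e4 e3 e2 e1 e0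
    set g0 := g.coeff 0
    set g1 := g.coeff 1
    set g2 := g.coeff 2
    set w0 := h.coeff 0
    set w1 := h.coeff 1
    set w2 := h.coeff 2
    have hg2ne : g2 ≠ 0 := by
      have := Polynomial.leadingCoeff_ne_zero.mpr hgne
      rwa [Polynomial.leadingCoeff, hd] at this
    by_cases hg1z : g1 = 0
    · left
      refine ⟨g0 * w2 - g2 * w0, ?_⟩
      rw [hg1z] at e3 e2 e1
      linear_combination (-(B + (g0*w2 + g2*w0))) * e2 + 4*C0*e4 + 4*g2*w2*e0
    · right
      refine ⟨g0 / g2, ?_⟩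
      have hkey : g1 * (w0 * g2 - g0 * w2) = 0 := by
        linear_combination g0 * e3 - g2 * e1
      have hw0 : w0 * g2 = g0 * w2 := by
        rcases mul_eq_zero.mp hkey with hc | hc
        · exact absurd hc hg1z
        · linear_combination hc
      have key2 : A * g0 ^ 2 = C0 * g2 ^ 2 := by
        linear_combination g0 ^ 2 * e4 - g2 ^ 2 * e0 - g0 * g2 * hw0
      field_simp
      linear_combination key2

lemma quartic_split (A B C0 : K) (hA : A ≠ 0)
    (hred : ¬ Irreducible (C A * X ^ 4 + C B * X ^ 2 + C C0 : K[X])) :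
    (∃ s : K, s ^ 2 = B ^ 2 - 4 * A * C0) ∨ (∃ s : K, A * s ^ 2 = C0) := by
  have hdeg_pos : ∀ p : K[X], p ≠ 0 → ¬ IsUnit p → 1 ≤ p.natDegree := by
    intro p hpne hpu
    rcases Nat.eq_zero_or_pos p.natDegree with h0 | h1
    · exfalso
      apply hpu
      rw [Polynomial.eq_C_of_natDegree_eq_zero h0]
      apply Polynomial.isUnit_C.mpr
      apply isUnit_iff_ne_zero.mpr
      intro hc
      apply hpne
      rw [Polynomial.eq_C_of_natDegree_eq_zero h0, hc, map_zero]
    · exact h1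
  have hFd : (C A * X ^ 4 + C B * X ^ 2 + C C0 : K[X]).natDegree = 4 := by
    compute_degree!
  have hFne : (C A * X ^ 4 + C B * X ^ 2 + C C0 : K[X]) ≠ 0 := fun h0 => by
    rw [h0] at hFd; simp at hFd
  have hFnu : ¬ IsUnit (C A * X ^ 4 + C B * X ^ 2 + C C0 : K[X]) := by
    intro hu
    have := Polynomial.natDegree_eq_zero_of_isUnit hu
    omega
  rw [irreducible_iff] at hred
  push_neg at hred
  obtain ⟨g, h, hF, hg, hh⟩ := hred hFnu
  have hgne : g ≠ 0 := fun h0 => hFne (by rw [hF, h0, zero_mul])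
  have hhne : h ≠ 0 := fun h0 => hFne (by rw [hF, h0, mul_zero])
  have hdsum : g.natDegree + h.natDegree = 4 := by
    rw [← Polynomial.natDegree_mul hgne hhne, ← hF, hFd]
  have hg1 : 1 ≤ g.natDegree := hdeg_pos g hgne hg
  have hh1 : 1 ≤ h.natDegree := hdeg_pos h hhne hh
  rcases le_or_gt g.natDegree 2 with hle | hlt
  · exact quartic_factor_aux A B C0 hA g h hF hg1 hle
  · exact quartic_factor_aux A B C0 hA h g (by rw [hF, mul_comm]) hh1 (by omega)

end Helpers

open MvPolynomial

section Equiv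

variable {k : Type*} [Field k]

noncomputable def toBivar (k : Type*) [Field k] :
    MvPolynomial (Fin 2) k ≃ₐ[k] Polynomial (Polynomial k) :=
  (MvPolynomial.finSuccEquiv k 1).trans
    (Polynomial.mapAlgEquiv
      ((MvPolynomial.finSuccEquiv k 0).trans
        (Polynomial.mapAlgEquiv (MvPolynomial.isEmptyAlgEquiv k (Fin 0)))))

lemma toBivar_X0 : toBivar k (X 0) = Polynomial.X := by
  simp [toBivar, MvPolynomial.finSuccEquiv_X_zero]

lemma toBivar_X1 : toBivar k (X 1) = Polynomial.C Polynomial.X := by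
  have h1 : (X 1 : MvPolynomial (Fin 2) k) = X (Fin.succ 0) := rfl
  rw [toBivar]
  simp only [AlgEquiv.trans_apply, h1, MvPolynomial.finSuccEquiv_X_succ]
  simp [MvPolynomial.finSuccEquiv_X_zero]

lemma toBivar_C (c : k) : toBivar k (C c) = Polynomial.C (Polynomial.C c) := by
  have : (C c : MvPolynomial (Fin 2) k) = algebraMap k _ c := rfl
  rw [this, AlgEquiv.commutes]
  rfl

end Equiv

theorem quartic_irreducible
    {k : Type*} [Field k] [IsAlgClosed k] (hchar : ringChar k ≠ 2)
    (α2 α3 β2 β3 τ1 τ2 ρ1 ρ2 b40 b22 b04 b20 b02 b00 : k)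
    (hτ1 : τ1 = α2 + α3) (hτ2 : τ2 = α2 * α3)
    (hρ1 : ρ1 = β2 + β3) (hρ2 : ρ2 = β2 * β3)
    (hb40 : b40 = ρ2) (hb22 : b22 = -(τ2 + ρ2)) (hb04 : b04 = τ2)
    (hb20 : b20 = 2 * τ1 * ρ2 - τ2 * ρ1 - ρ1 * ρ2)
    (hb02 : b02 = -(τ1 * τ2) - τ1 * ρ2 + 2 * τ2 * ρ1)
    (hb00 : b00 = τ1 ^ 2 * ρ2 - τ1 * τ2 * ρ1 - τ1 * ρ1 * ρ2 + τ2 ^ 2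
        + τ2 * ρ1 ^ 2 - 2 * τ2 * ρ2 + ρ2 ^ 2)
    (hdist : α2 ≠ α3 ∧ α2 ≠ β2 ∧ α2 ≠ β3 ∧ α3 ≠ β2 ∧ α3 ≠ β3 ∧ β2 ≠ β3)
    (hnz : α2 ≠ 0 ∧ α3 ≠ 0 ∧ β2 ≠ 0 ∧ β3 ≠ 0)
    (hnh : α2 * α3 ≠ β2 * β3) :
    Irreducible
      (C b40 * X 0 ^ 4 + C b22 * X 0 ^ 2 * X 1 ^ 2 + C b04 * X 1 ^ 4
        + C b20 * X 0 ^ 2 + C b02 * X 1 ^ 2 + C b00 : MvPolynomial (Fin 2) k) := by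
  obtain ⟨ha23, -, -, -, -, -⟩ := hdist
  obtain ⟨ha2, ha3, hc2, hc3⟩ := hnz
  have two_ne : (2 : k) ≠ 0 := Ring.two_ne_zero hchar
  have hτρ : τ2 - ρ2 ≠ 0 := by
    rw [hτ2, hρ2]; exact sub_ne_zero.mpr hnh
  have hρ2ne : ρ2 ≠ 0 := by rw [hρ2]; exact mul_ne_zero hc2 hc3
  have hτ2ne : τ2 ≠ 0 := by rw [hτ2]; exact mul_ne_zero ha2 ha3
  have hb40ne : b40 ≠ 0 := by rw [hb40]; exact hρ2ne
  have hb04ne : b04 ≠ 0 := by rw [hb04]; exact hτ2ne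
  have h16 : (16 : k) ≠ 0 := by
    have : (16 : k) = 2 ^ 4 := by norm_num
    rw [this]; exact pow_ne_zero 4 two_ne
  have hsq23 : τ1 ^ 2 - 4 * τ2 ≠ 0 := by
    have : τ1 ^ 2 - 4 * τ2 = (α2 - α3) ^ 2 := by rw [hτ1, hτ2]; ring
    rw [this]; exact pow_ne_zero 2 (sub_ne_zero.mpr ha23)
  -- the two discriminant-type nonvanishing facts
  have hd4 : b22 ^ 2 - 4 * (b40 * b04) = (τ2 - ρ2) ^ 2 := by
    rw [hb22, hb40, hb04]; ring
  have hd4ne : b22 ^ 2 - 4 * (b40 * b04) ≠ 0 := by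
    rw [hd4]; exact pow_ne_zero 2 hτρ
  have hDid : (2 * (b22 * b20) - 4 * (b40 * b02)) ^ 2
      - 4 * (b22 ^ 2 - 4 * (b40 * b04)) * (b20 ^ 2 - 4 * (b40 * b00))
      = 16 * ρ2 * (τ2 - ρ2) ^ 4 := by
    rw [hb22, hb20, hb40, hb02, hb04, hb00]; ring
  have hDne : (2 * (b22 * b20) - 4 * (b40 * b02)) ^ 2
      - 4 * (b22 ^ 2 - 4 * (b40 * b04)) * (b20 ^ 2 - 4 * (b40 * b00)) ≠ 0 := by
    rw [hDid]
    exact mul_ne_zero (mul_ne_zero h16 hρ2ne) (pow_ne_zero 4 hτρ)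
  have hEid : (b40 * b02) ^ 2 - 4 * (b40 * b04) * (b40 * b00)
      = ρ2 ^ 2 * ((τ1 ^ 2 - 4 * τ2) * (τ2 - ρ2) ^ 2) := by
    rw [hb40, hb02, hb04, hb00]; ring
  have hEne : (b40 * b02) ^ 2 - 4 * (b40 * b04) * (b40 * b00) ≠ 0 := by
    rw [hEid]
    exact mul_ne_zero (pow_ne_zero 2 hρ2ne) (mul_ne_zero hsq23 (pow_ne_zero 2 hτρ))
  have hb4004ne : b40 * b04 ≠ 0 := mul_ne_zero hb40ne hb04ne
  clear hDid hEid hd4 hsq23 h16 hτρ hρ2ne hτ2ne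
  clear hτ1 hτ2 hρ1 hρ2 hb40 hb22 hb04 hb20 hb02 hb00 hnh ha23 ha2 ha3 hc2 hc3 hchar
  -- pass to k[Z][Y]
  set q4 : Polynomial k := Polynomial.C b40 with hq4def
  set q2 : Polynomial k := Polynomial.C b22 * Polynomial.X ^ 2 + Polynomial.C b20 with hq2def
  set q0 : Polynomial k := Polynomial.C b04 * Polynomial.X ^ 4 + Polynomial.C b02 * Polynomial.X ^ 2
      + Polynomial.C b00 with hq0def
  set P : Polynomial (Polynomial k) :=
      Polynomial.C q4 * Polynomial.X ^ 4 + Polynomial.C q2 * Polynomial.X ^ 2 + Polynomial.C q0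
    with hPdef
  have himg : toBivar k (C b40 * X 0 ^ 4 + C b22 * X 0 ^ 2 * X 1 ^ 2 + C b04 * X 1 ^ 4
        + C b20 * X 0 ^ 2 + C b02 * X 1 ^ 2 + C b00) = P := by
    rw [hPdef, hq4def, hq2def, hq0def]
    simp only [map_add, map_mul, map_pow, toBivar_C, toBivar_X0, toBivar_X1]
    ring
  rw [← MulEquiv.irreducible_iff (toBivar k), himg]
  -- primitivity and Gauss
  have hq4unit : IsUnit q4 := Polynomial.isUnit_C.mpr (isUnit_iff_ne_zero.mpr hb40ne)
  have hPprim : P.IsPrimitive := by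
    intro r hr
    have h4 : r ∣ P.coeff 4 := (Polynomial.C_dvd_iff_dvd_coeff r P).mp hr 4
    have hc : P.coeff 4 = q4 := by
      rw [hPdef]
      simp [Polynomial.coeff_add, Polynomial.coeff_C_mul, Polynomial.coeff_X_pow,
        Polynomial.coeff_C]
    rw [hc] at h4
    exact isUnit_of_dvd_unit h4 hq4unit
  letI : DecidableEq k := Classical.decEq k
  rw [Polynomial.IsPrimitive.irreducible_iff_irreducible_map_fraction_map
    (K := FractionRing (Polynomial k)) hPprim]
  set φ := algebraMap (Polynomial k) (FractionRing (Polynomial k)) with hφdef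
  have hinj : Function.Injective φ := IsFractionRing.injective (Polynomial k) _
  have hmap : P.map φ = Polynomial.C (φ q4) * Polynomial.X ^ 4
      + Polynomial.C (φ q2) * Polynomial.X ^ 2 + Polynomial.C (φ q0) := by
    rw [hPdef]
    simp [Polynomial.map_add, Polynomial.map_mul, Polynomial.map_pow, Polynomial.map_C,
      Polynomial.map_X]
  rw [hmap]
  by_contra hred
  have hq4ne : q4 ≠ 0 := by
    rw [hq4def]; exact fun h => hb40ne (by simpa using congrArg (fun p => Polynomial.coeff p 0) h)
  have hAne : φ q4 ≠ 0 := fun h => hq4ne (hinj (by rw [h, map_zero]))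
  rcases quartic_split (φ q4) (φ q2) (φ q0) hAne hred with ⟨s, hs⟩ | ⟨s, hs⟩
  · -- Δ is a square in the fraction field
    have hs' : s ^ 2 = φ (q2 ^ 2 - 4 * (q4 * q0)) := by
      rw [hs, map_sub, map_pow, map_mul, map_mul, map_ofNat]
      ring
    obtain ⟨t, ht⟩ := sq_descend _ s hs'
    have hq : q2 ^ 2 - 4 * (q4 * q0)
        = Polynomial.C (b22 ^ 2 - 4 * (b40 * b04)) * Polynomial.X ^ 4
          + Polynomial.C (2 * (b22 * b20) - 4 * (b40 * b02)) * Polynomial.X ^ 2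
          + Polynomial.C (b20 ^ 2 - 4 * (b40 * b00)) := by
      rw [hq2def, hq4def, hq0def]
      simp only [map_sub, map_mul, map_add, map_pow, map_ofNat]
      ring
    rw [hq] at ht
    exact not_sq_even_quartic two_ne _ _ _ hd4ne hDne t ht
  · -- q0/q4 is a square in the fraction field
    have hs' : (φ q4 * s) ^ 2 = φ (q4 * q0) := by
      have h1 : (φ q4 * s) ^ 2 = φ q4 * (φ q4 * s ^ 2) := by ring
      rw [h1, hs, ← map_mul]
    obtain ⟨t, ht⟩ := sq_descend _ _ hs'
    have hq : q4 * q0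
        = Polynomial.C (b40 * b04) * Polynomial.X ^ 4
          + Polynomial.C (b40 * b02) * Polynomial.X ^ 2
          + Polynomial.C (b40 * b00) := by
      rw [hq4def, hq0def]
      simp only [map_mul, map_add]
      ring
    rw [hq] at ht
    exact not_sq_even_quartic two_ne _ _ _ hb4004ne hEne t ht
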